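/- Consider the constrained opinion-dynamics game: each agent i has a nonempty convex compact set X^i ⊂ ℝ^n, an initial opinion x^i_{(0)} ∈ ℝ^n, and a stubbornness parameter θ_i > 0, and given the opinions (x^j)_{j≠i} it selects argmin_{x ∈ X^i} [ Σ_{j≠i} P_{ij} ‖x − x^j‖² + θ_i ‖x − x^i_{(0)}‖² ]. Suppose P ∈ ℝ^{N×N} is entrywise nonnegative and row stochastic with P_{ii} = 0 for all i, and the spectral norm satisfies ‖P‖₂ ≤ 1. Then from any initial opinions, the synchronous best-response dynamics x^i_{(k+1)} := argmin_{x∈X^i}[ Σ_{j≠i} P_{ij} ‖x − x^j_{(k)}‖² + θ_i ‖x − x^i_{(0)}‖² ] converge as k → ∞ to limits (x̄^i)_{i=1}^N forming a Nash equilibrium: for every i, x̄^i minimizes y ↦ Σ_{j≠i} P_{ij} ‖y − x̄^j‖² + θ_i ‖y − x^i_{(0)}‖² over X^i. (Corollary 2, case 1.) -/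

import Mathlib

open Matrix Filter Topology Finset
open scoped Kronecker

noncomputable section

/-- Euclidean norm of a finitely-indexed real vector. -/
def eunorm {ι : Type*} [Fintype ι] (x : ι → ℝ) : ℝ := Real.sqrt (x ⬝ᵥ x)

/-- `S`-weighted norm `‖x‖_S = √(xᵀ S x)`. -/
def wnorm {ι : Type*} [Fintype ι] (S : Matrix ι ι ℝ) (x : ι → ℝ) : ℝ :=
  Real.sqrt (x ⬝ᵥ S.mulVec x)

/-- Quadratic cost `J(x,z) = q·xᵀQx + 2(Cz+c)ᵀx`. -/
def cost {n : ℕ} (Q C : Matrix (Fin n) (Fin n) ℝ) (qi : ℝ) (ci : Fin n → ℝ)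
    (x z : Fin n → ℝ) : ℝ :=
  qi * (x ⬝ᵥ Q.mulVec x) + 2 * ((C.mulVec z + ci) ⬝ᵥ x)

/-- `xst` is the optimal-response map: for every `z`, `xst z` minimizes the cost over `X`. -/
def IsOptResp {n : ℕ} (X : Set (Fin n → ℝ)) (Q C : Matrix (Fin n) (Fin n) ℝ)
    (qi : ℝ) (ci : Fin n → ℝ) (xst : (Fin n → ℝ) → (Fin n → ℝ)) : Prop :=
  ∀ z, xst z ∈ X ∧ ∀ y ∈ X, cost Q C qi ci (xst z) z ≤ cost Q C qi ci y z

/-- Stacked optimal responses `x⋆(z) = (x^{1⋆}(z^1);…;x^{N⋆}(z^N))`. -/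
def extMap {n N : ℕ} (xstar : Fin N → (Fin n → ℝ) → (Fin n → ℝ))
    (z : Fin N × Fin n → ℝ) : Fin N × Fin n → ℝ :=
  fun p => xstar p.1 (fun j => z (p.1, j)) p.2

/-- Extended aggregation map `A_ν(z) = (P^ν ⊗ I_n) x⋆(z)`. -/
def aggMap {n N : ℕ} (P : Matrix (Fin N) (Fin N) ℝ) (ν : ℕ)
    (xstar : Fin N → (Fin n → ℝ) → (Fin n → ℝ)) (z : Fin N × Fin n → ℝ) :
    Fin N × Fin n → ℝ :=
  ((P ^ ν) ⊗ₖ (1 : Matrix (Fin n) (Fin n) ℝ)).mulVec (extMap xstar z)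

/-- The matrix `(1/N)·1_N 1_Nᵀ` with all entries `1/N`. -/
def avgMat (N : ℕ) : Matrix (Fin N) (Fin N) ℝ := Matrix.of fun _ _ => (N : ℝ)⁻¹

/-- Mean-field aggregation map `A(z) = ((1/N)·1 1ᵀ ⊗ I_n) x⋆(z)`. -/
def meanAgg {n N : ℕ} (xstar : Fin N → (Fin n → ℝ) → (Fin n → ℝ))
    (z : Fin N × Fin n → ℝ) : Fin N × Fin n → ℝ :=
  ((avgMat N) ⊗ₖ (1 : Matrix (Fin n) (Fin n) ℝ)).mulVec (extMap xstar z)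

/-- Maximum-row-sum matrix norm `‖A‖_∞`. -/
def rowSumNorm {N : ℕ} (A : Matrix (Fin N) (Fin N) ℝ) : ℝ := ⨆ i, ∑ j, |A i j|

/-- Spectral norm (ℓ²-operator norm) of a real matrix. -/
def specNorm {ι : Type*} [Fintype ι] [DecidableEq ι] (P : Matrix ι ι ℝ) : ℝ :=
  ‖LinearMap.toContinuousLinearMap (Matrix.toEuclideanLin P)‖

/-- Map `A_{m,m}(z) = (P^m ⊗ I_n) x⋆((P^m ⊗ I_n) z)`. -/
def halfAgg {n N : ℕ} (P : Matrix (Fin N) (Fin N) ℝ) (m : ℕ)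
    (xstar : Fin N → (Fin n → ℝ) → (Fin n → ℝ)) (z : Fin N × Fin n → ℝ) :
    Fin N × Fin n → ℝ :=
  ((P ^ m) ⊗ₖ (1 : Matrix (Fin n) (Fin n) ℝ)).mulVec
    (extMap xstar (((P ^ m) ⊗ₖ (1 : Matrix (Fin n) (Fin n) ℝ)).mulVec z))

/-- Opinion-dynamics cost of agent `i` choosing `y` given opinions `x`:
`Σ_{j≠i} P_{ij}‖y − x^j‖² + θ_i‖y − x^i_{(0)}‖²`. -/
def opCost {n N : ℕ} (P : Matrix (Fin N) (Fin N) ℝ) (θ : Fin N → ℝ)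
    (x0 : Fin N → Fin n → ℝ) (i : Fin N) (y : Fin n → ℝ)
    (x : Fin N → Fin n → ℝ) : ℝ :=
  (∑ j ∈ Finset.univ.erase i, P i j * ((y - x j) ⬝ᵥ (y - x j)))
    + θ i * ((y - x0 i) ⬝ᵥ (y - x0 i))


open scoped RealInnerProductSpace

/-- Identity cast into Euclidean space. -/
private def toE {n : ℕ} (x : Fin n → ℝ) : EuclideanSpace ℝ (Fin n) := WithLp.toLp 2 x

/-- Componentwise cast back from Euclidean space. -/
private def fromE {n N : ℕ} (x : Fin N → EuclideanSpace ℝ (Fin n)) : Fin N → Fin n → ℝ :=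
  fun j => (x j).ofLp

/-- Identity cast of sets into Euclidean space. -/
private def toSE {n : ℕ} (S : Set (Fin n → ℝ)) : Set (EuclideanSpace ℝ (Fin n)) :=
  WithLp.ofLp ⁻¹' S

private lemma inner_eq_dot' {n : ℕ} (x y : EuclideanSpace ℝ (Fin n)) :
    ⟪x, y⟫ = (x : Fin n → ℝ) ⬝ᵥ y := by
  simp [PiLp.inner_apply, RCLike.inner_apply, dotProduct, mul_comm]

/-- Variational inequality for minimizers of `y ↦ a⟪y,y⟫ - 2⟪b,y⟫` over a convex set. -/
private lemma varineq' {H : Type*} [NormedAddCommGroup H] [InnerProductSpace ℝ H]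
    {X : Set H} (hX : Convex ℝ X) {a : ℝ} (ha : 0 < a) {b u : H} (hu : u ∈ X)
    (hmin : ∀ y ∈ X, a * ⟪u, u⟫ - 2 * ⟪b, u⟫ ≤ a * ⟪y, y⟫ - 2 * ⟪b, y⟫) :
    ∀ y ∈ X, 0 ≤ ⟪a • u - b, y - u⟫ := by
  intro y hy
  by_contra hneg
  push_neg at hneg
  set s : ℝ := ⟪a • u - b, y - u⟫ with hs
  set Q : ℝ := ⟪y - u, y - u⟫ with hQ
  have hQ0 : 0 ≤ Q := real_inner_self_nonneg
  have key : ∀ t : ℝ, 0 < t → t ≤ 1 → 0 ≤ 2 * s + t * (a * Q) := by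
    intro t ht0 ht1
    have hz : u + t • (y - u) ∈ X := by
      have := hX hu hy (by linarith : (0:ℝ) ≤ 1 - t) (le_of_lt ht0) (by ring)
      convert this using 1
      module
    have h2 := hmin _ hz
    have hzz : ⟪u + t • (y - u), u + t • (y - u)⟫
        = ⟪u, u⟫ + 2 * (t * ⟪u, y - u⟫) + t^2 * Q := by
      rw [real_inner_add_add_self, real_inner_smul_right, real_inner_smul_left,
        real_inner_smul_right]
      ring
    have hbz : ⟪b, u + t • (y - u)⟫ = ⟪b, u⟫ + t * ⟪b, y - u⟫ := by
      rw [inner_add_right, real_inner_smul_right]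
    have hsval : s = a * ⟪u, y - u⟫ - ⟪b, y - u⟫ := by
      rw [hs, inner_sub_left, real_inner_smul_left]
    rw [hzz, hbz] at h2
    have h3 : 0 ≤ 2 * t * s + t^2 * (a * Q) := by nlinarith [h2]
    nlinarith [mul_pos ht0 ht0]
  have haQ : 0 < a * Q + 1 := by nlinarith
  set t0 : ℝ := min 1 ((-s) / (a * Q + 1)) with ht0def
  have ht0pos : 0 < t0 := lt_min one_pos (div_pos (by linarith) haQ)
  have ht0le : t0 ≤ 1 := min_le_left _ _
  have h4 := key t0 ht0pos ht0le
  have h5 : t0 * (a * Q + 1) ≤ -s := by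
    have := min_le_right (1:ℝ) ((-s) / (a * Q + 1))
    calc t0 * (a * Q + 1) ≤ ((-s) / (a * Q + 1)) * (a * Q + 1) :=
          mul_le_mul_of_nonneg_right this (le_of_lt haQ)
      _ = -s := by field_simp
  have h6 : t0 * (a * Q + 1) = t0 * (a * Q) + t0 := by ring
  linarith

private lemma dist_bound' {H : Type*} [NormedAddCommGroup H] [InnerProductSpace ℝ H]
    {X : Set H} (hX : Convex ℝ X) {a : ℝ} (ha : 0 < a) {b b' u u' : H}
    (hu : u ∈ X) (hu' : u' ∈ X)
    (hmin : ∀ y ∈ X, a * ⟪u, u⟫ - 2 * ⟪b, u⟫ ≤ a * ⟪y, y⟫ - 2 * ⟪b, y⟫)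
    (hmin' : ∀ y ∈ X, a * ⟪u', u'⟫ - 2 * ⟪b', u'⟫ ≤ a * ⟪y, y⟫ - 2 * ⟪b', y⟫) :
    ‖u - u'‖ ≤ ‖b - b'‖ / a := by
  have h1 := varineq' hX ha hu hmin u' hu'
  have h2 := varineq' hX ha hu' hmin' u hu
  have hsum : a * ⟪u - u', u - u'⟫ ≤ ⟪b - b', u - u'⟫ := by
    have e1 : ⟪a • u - b, u' - u⟫ = -(a * ⟪u, u - u'⟫) + ⟪b, u - u'⟫ := by
      rw [inner_sub_left, real_inner_smul_left]
      have : (u' - u) = -(u - u') := by abel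
      rw [this, inner_neg_right, inner_neg_right]
      ring
    have e2 : ⟪a • u' - b', u - u'⟫ = a * ⟪u', u - u'⟫ - ⟪b', u - u'⟫ := by
      rw [inner_sub_left, real_inner_smul_left]
    rw [e1] at h1; rw [e2] at h2
    have e3 : ⟪u, u - u'⟫ - ⟪u', u - u'⟫ = ⟪u - u', u - u'⟫ := by
      rw [← inner_sub_left]
    have e4 : ⟪b, u - u'⟫ - ⟪b', u - u'⟫ = ⟪b - b', u - u'⟫ := by
      rw [← inner_sub_left]
    nlinarith [h1, h2]
  have hcs : ⟪b - b', u - u'⟫ ≤ ‖b - b'‖ * ‖u - u'‖ := real_inner_le_norm _ _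
  have hns : ⟪u - u', u - u'⟫ = ‖u - u'‖ * ‖u - u'‖ := real_inner_self_eq_norm_mul_norm _
  rw [hns] at hsum
  rcases eq_or_lt_of_le (norm_nonneg (u - u')) with h0 | h0
  · rw [← h0]; positivity
  · rw [le_div_iff₀ ha]
    have := le_trans hsum hcs
    nlinarith

/-- The linear part of the best-response target. -/
private def bmap' {n N : ℕ} (P : Matrix (Fin N) (Fin N) ℝ) (θ : Fin N → ℝ)
    (x0 : Fin N → Fin n → ℝ) (i : Fin N) (x : Fin N → Fin n → ℝ) : Fin n → ℝ :=
  (∑ j ∈ Finset.univ.erase i, P i j • x j) + θ i • x0 i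

private lemma fsum_dot' {n : ℕ} {α : Type*} (s : Finset α) (f : α → Fin n → ℝ)
    (y : Fin n → ℝ) : (∑ j ∈ s, f j) ⬝ᵥ y = ∑ j ∈ s, f j ⬝ᵥ y := by
  simp only [dotProduct, Finset.sum_apply, Finset.sum_mul]
  exact Finset.sum_comm

private lemma opCost_eq' {n N : ℕ} (P : Matrix (Fin N) (Fin N) ℝ) (θ : Fin N → ℝ)
    (x0 : Fin N → Fin n → ℝ) (i : Fin N) (y : Fin n → ℝ) (x : Fin N → Fin n → ℝ)
    (hsum : ∑ j ∈ Finset.univ.erase i, P i j = 1) :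
    opCost P θ x0 i y x = (1 + θ i) * (y ⬝ᵥ y) - 2 * ((bmap' P θ x0 i x) ⬝ᵥ y)
      + ((∑ j ∈ Finset.univ.erase i, P i j * (x j ⬝ᵥ x j)) + θ i * (x0 i ⬝ᵥ x0 i)) := by
  have expand : ∀ v : Fin n → ℝ, (y - v) ⬝ᵥ (y - v) = y ⬝ᵥ y - 2 * (v ⬝ᵥ y) + v ⬝ᵥ v := by
    intro v
    rw [sub_dotProduct, dotProduct_sub, dotProduct_sub, dotProduct_comm y v]
    ring
  have hb : (bmap' P θ x0 i x) ⬝ᵥ y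
      = (∑ j ∈ Finset.univ.erase i, P i j * (x j ⬝ᵥ y)) + θ i * (x0 i ⬝ᵥ y) := by
    rw [bmap', add_dotProduct, fsum_dot']
    simp [smul_dotProduct]
  rw [opCost, hb, expand (x0 i)]
  rw [Finset.sum_congr rfl fun j _ => by rw [expand (x j)]]
  have h1 : ∑ j ∈ Finset.univ.erase i, P i j * (y ⬝ᵥ y - 2 * (x j ⬝ᵥ y) + x j ⬝ᵥ x j)
      = (∑ j ∈ Finset.univ.erase i, P i j) * (y ⬝ᵥ y)
        - 2 * (∑ j ∈ Finset.univ.erase i, P i j * (x j ⬝ᵥ y))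
        + ∑ j ∈ Finset.univ.erase i, P i j * (x j ⬝ᵥ x j) := by
    rw [Finset.sum_mul, Finset.mul_sum, ← Finset.sum_sub_distrib, ← Finset.sum_add_distrib]
    exact Finset.sum_congr rfl fun j _ => by ring
  rw [h1, hsum]
  ring

/-- Corollary 2, case 1: with all agents partially stubborn (`θ_i > 0`),
`P_{ii} = 0` and `‖P‖₂ ≤ 1`, the synchronous best-response opinion dynamics converge from
any initial opinions to a Nash equilibrium. -/
theorem opinion_BR_dynamics_converge {n N : ℕ} (hn : 0 < n) (hN : 0 < N)
    (X : Fin N → Set (Fin n → ℝ))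
    (hXne : ∀ i, (X i).Nonempty) (hXconv : ∀ i, Convex ℝ (X i))
    (hXcpt : ∀ i, IsCompact (X i))
    (x0 : Fin N → Fin n → ℝ) (θ : Fin N → ℝ) (hθ : ∀ i, 0 < θ i)
    (P : Matrix (Fin N) (Fin N) ℝ) (hPnn : ∀ i j, 0 ≤ P i j)
    (hPrs : ∀ i, ∑ j, P i j = 1) (hdiag : ∀ i, P i i = 0)
    (hP2 : specNorm P ≤ 1)
    (br : (Fin N → Fin n → ℝ) → (Fin N → Fin n → ℝ))
    (hbr : ∀ x i, br x i ∈ X i ∧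
      ∀ y ∈ X i, opCost P θ x0 i (br x i) x ≤ opCost P θ x0 i y x) :
    ∀ xinit : Fin N → Fin n → ℝ, ∃ xbar : Fin N → Fin n → ℝ,
      Tendsto (fun k => br^[k] xinit) atTop (𝓝 xbar) ∧
      ∀ i, xbar i ∈ X i ∧
        ∀ y ∈ X i, opCost P θ x0 i (xbar i) xbar ≤ opCost P θ x0 i y xbar := by
  classical
  haveI : Nonempty (Fin N) := Fin.pos_iff_nonempty.mp hN
  set θm : ℝ := Finset.univ.inf' Finset.univ_nonempty θ with hθmdef
  have hθm : 0 < θm := by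
    rw [hθmdef, Finset.lt_inf'_iff]
    exact fun i _ => hθ i
  have hθmle : ∀ i, θm ≤ θ i := fun i => Finset.inf'_le _ (Finset.mem_univ i)
  set K : NNReal := ⟨(1 + θm)⁻¹, by positivity⟩ with hKdef
  have hK1 : K < 1 := by
    rw [← NNReal.coe_lt_coe]
    show (1 + θm)⁻¹ < 1
    rw [inv_lt_one_iff₀]
    right; linarith
  have hsumE : ∀ i : Fin N, ∑ j ∈ Finset.univ.erase i, P i j = 1 := by
    intro i
    rw [Finset.sum_erase_eq_sub (Finset.mem_univ i), hPrs, hdiag, sub_zero]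
  -- quadratic-form minimality of the best response
  have hquad : ∀ (x : Fin N → Fin n → ℝ) (i : Fin N), ∀ y ∈ X i,
      (1 + θ i) * ((br x i) ⬝ᵥ (br x i)) - 2 * ((bmap' P θ x0 i x) ⬝ᵥ (br x i))
      ≤ (1 + θ i) * (y ⬝ᵥ y) - 2 * ((bmap' P θ x0 i x) ⬝ᵥ y) := by
    intro x i y hy
    have h := (hbr x i).2 y hy
    rw [opCost_eq' P θ x0 i _ x (hsumE i), opCost_eq' P θ x0 i y x (hsumE i)] at h
    linarith
  have hquadI : ∀ (x : Fin N → Fin n → ℝ) (i : Fin N),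
      ∀ y ∈ toSE (X i),
      (1 + θ i) * ⟪toE (br x i), toE (br x i)⟫
        - 2 * ⟪toE (bmap' P θ x0 i x), toE (br x i)⟫
      ≤ (1 + θ i) * ⟪y, y⟫ - 2 * ⟪toE (bmap' P θ x0 i x), y⟫ := by
    intro x i y hy
    rw [inner_eq_dot', inner_eq_dot', inner_eq_dot', inner_eq_dot']
    exact hquad x i y hy
  -- componentwise contraction estimate
  have hcomp : ∀ (x x' : Fin N → EuclideanSpace ℝ (Fin n)) (i : Fin N),
      dist (toE (br (fromE x) i)) (toE (br (fromE x') i)) ≤ (1 + θ i)⁻¹ * dist x x' := by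
    intro x x' i
    have ha : (0:ℝ) < 1 + θ i := by have := hθ i; linarith
    have hXc : Convex ℝ (toSE (X i)) :=
      (hXconv i).linear_preimage (WithLp.linearEquiv 2 ℝ (Fin n → ℝ)).toLinearMap
    have hmem : toE (br (fromE x) i) ∈ toSE (X i) := (hbr (fromE x) i).1
    have hmem' : toE (br (fromE x') i) ∈ toSE (X i) := (hbr (fromE x') i).1
    have hd := dist_bound' (X := toSE (X i)) hXc ha
      hmem hmem' (hquadI (fromE x) i) (hquadI (fromE x') i)
    -- bound ‖b - b'‖ by dist x x'
    have hbd : toE (bmap' P θ x0 i (fromE x)) - toE (bmap' P θ x0 i (fromE x'))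
        = ∑ j ∈ Finset.univ.erase i, P i j • (x j - x' j) := by
      apply WithLp.ofLp_injective
      simp only [WithLp.ofLp_sub, WithLp.ofLp_sum, WithLp.ofLp_smul, toE, fromE]
      rw [bmap', bmap', add_sub_add_right_eq_sub, ← Finset.sum_sub_distrib]
      exact Finset.sum_congr rfl fun j _ => (smul_sub _ _ _).symm
    have hbnorm : ‖toE (bmap' P θ x0 i (fromE x)) - toE (bmap' P θ x0 i (fromE x'))‖ ≤ dist x x' := by
      rw [hbd]
      calc ‖∑ j ∈ Finset.univ.erase i, P i j • (x j - x' j)‖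
          ≤ ∑ j ∈ Finset.univ.erase i, ‖P i j • (x j - x' j)‖ := norm_sum_le _ _
        _ = ∑ j ∈ Finset.univ.erase i, P i j * ‖x j - x' j‖ := by
            refine Finset.sum_congr rfl fun j _ => ?_
            rw [norm_smul, Real.norm_eq_abs, abs_of_nonneg (hPnn i j)]
        _ ≤ ∑ j ∈ Finset.univ.erase i, P i j * dist x x' := by
            refine Finset.sum_le_sum fun j _ => ?_
            refine mul_le_mul_of_nonneg_left ?_ (hPnn i j)
            rw [← dist_eq_norm]
            exact dist_le_pi_dist x x' j
        _ = dist x x' := by rw [← Finset.sum_mul, hsumE i, one_mul]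
    calc dist (toE (br (fromE x) i)) (toE (br (fromE x') i))
        = ‖toE (br (fromE x) i) - toE (br (fromE x') i)‖ := dist_eq_norm _ _
      _ ≤ ‖toE (bmap' P θ x0 i (fromE x)) - toE (bmap' P θ x0 i (fromE x'))‖ / (1 + θ i) := hd
      _ ≤ dist x x' / (1 + θ i) := div_le_div_of_nonneg_right hbnorm ha.le
      _ = (1 + θ i)⁻¹ * dist x x' := by rw [div_eq_inv_mul]
  -- the contraction
  have hcontr : ContractingWith K
      (fun (x : Fin N → EuclideanSpace ℝ (Fin n)) (i : Fin N) => toE (br (fromE x) i)) := by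
    refine ⟨hK1, LipschitzWith.of_dist_le_mul fun x x' => ?_⟩
    have hKnn : (0:ℝ) ≤ (K : ℝ) * dist x x' := mul_nonneg K.2 dist_nonneg
    rw [dist_pi_le_iff hKnn]
    intro i
    refine (hcomp x x' i).trans ?_
    have h1 : (1 + θ i)⁻¹ ≤ (K : ℝ) := by
      show (1 + θ i)⁻¹ ≤ (1 + θm)⁻¹
      apply inv_anti₀ (by linarith)
      linarith [hθmle i]
    exact mul_le_mul_of_nonneg_right h1 (dist_nonneg : (0:ℝ) ≤ dist x x')
  haveI : Nonempty (Fin N → EuclideanSpace ℝ (Fin n)) := ⟨fun _ => 0⟩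
  intro xinit
  set xbE : Fin N → EuclideanSpace ℝ (Fin n) := ContractingWith.fixedPoint
    (fun (x : Fin N → EuclideanSpace ℝ (Fin n)) (i : Fin N) => toE (br (fromE x) i)) hcontr with hxbE
  have hfix2 : br (fromE xbE) = fromE xbE := by
    funext i
    exact congrArg WithLp.ofLp (congrFun hcontr.fixedPoint_isFixedPt i)
  refine ⟨fromE xbE, ?_, ?_⟩
  · have ht := hcontr.tendsto_iterate_fixedPoint (fun j => toE (xinit j))
    have hc : Continuous (fromE : (Fin N → EuclideanSpace ℝ (Fin n)) → Fin N → Fin n → ℝ) :=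
      continuous_pi fun j => (PiLp.continuous_ofLp 2 _).comp (continuous_apply j)
    have hsc : Function.Semiconj fromE
        (fun (x : Fin N → EuclideanSpace ℝ (Fin n)) (i : Fin N) => toE (br (fromE x) i)) br :=
      fun x => rfl
    refine ((hc.tendsto _).comp ht).congr fun k => ?_
    exact hsc.iterate_right k _
  · intro i
    refine ⟨?_, ?_⟩
    · have h1 := (hbr (fromE xbE) i).1
      rwa [hfix2] at h1
    · intro y hy
      have h := (hbr (fromE xbE) i).2 y hy
      rwa [hfix2] at h
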